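/- Let U be a unitary operator on a Hilbert space H, let (P_i)_{i∈I} be orthogonal projections on H summing to the identity, and for x ∈ {0,1}^I let O_x = ∑_i (−1)^{x_i} P_i. Then for any unit vectors ψ, φ ∈ H and any x, y ∈ {0,1}^I: |⟨ψ|φ⟩ − ⟨U O_x ψ | U O_y φ⟩| ≤ 2 ∑_{i : x_i ≠ y_i} ‖P_i ψ‖·‖P_i φ‖. -/

import Mathlib

open scoped BigOperators


lemma sa_inner {H : Type*} [NormedAddCommGroup H] [InnerProductSpace ℂ H] [CompleteSpace H]
    (A : H →L[ℂ] H) (h : IsSelfAdjoint A) (u v : H) :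
    (inner ℂ (A u) v : ℂ) = inner ℂ u (A v) := by
  nth_rewrite 1 [← h.adjoint_eq]
  exact ContinuousLinearMap.adjoint_inner_left A v u

lemma proj_ortho {H : Type*} [NormedAddCommGroup H] [InnerProductSpace ℂ H] [CompleteSpace H]
    {ι : Type*} [Fintype ι] (P : ι → H →L[ℂ] H)
    (hproj : ∀ i, IsIdempotentElem (P i)) (hsa : ∀ i, IsSelfAdjoint (P i))
    (hsum : ∑ i, P i = 1) {i j : ι} (hij : i ≠ j) (v : H) : P i (P j v) = 0 := by
  classical
  have hid : ∀ k u, P k (P k u) = P k u := fun k u => by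
    rw [← ContinuousLinearMap.mul_apply, (hproj k).eq]
  set w := P j v with hw
  have hterm : ∀ k, (inner ℂ w (P k w) : ℂ) = (‖P k w‖ : ℂ)^2 := by
    intro k
    conv_lhs => rw [← hid k w]
    rw [← sa_inner (P k) (hsa k) w (P k w), inner_self_eq_norm_sq_to_K]
    norm_cast
  have hsum0 : ∑ k ∈ Finset.univ.erase j, (inner ℂ w (P k w) : ℂ) = 0 := by
    have h2 : ∑ k ∈ Finset.univ.erase j, (inner ℂ w (P k w) : ℂ)
        = inner ℂ w ((∑ k ∈ Finset.univ.erase j, P k) w) := by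
      rw [ContinuousLinearMap.sum_apply, inner_sum]
    have h3 : (∑ k ∈ Finset.univ.erase j, P k) = 1 - P j := by
      rw [eq_sub_iff_add_eq, Finset.sum_erase_add _ _ (Finset.mem_univ j), hsum]
    rw [h2, h3]
    have h4 : (1 - P j) w = w - P j w := rfl
    rw [h4, hw, hid j v, sub_self, inner_zero_right]
  have hreal : ∑ k ∈ Finset.univ.erase j, (‖P k w‖^2 : ℝ) = 0 := by
    simp_rw [hterm, ← Complex.ofReal_pow] at hsum0
    exact_mod_cast hsum0
  have hnn : ∀ k ∈ Finset.univ.erase j, (0:ℝ) ≤ ‖P k w‖^2 := fun k _ => sq_nonneg _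
  have hz := (Finset.sum_eq_zero_iff_of_nonneg hnn).mp hreal i (by simp [hij])
  have : ‖P i w‖ = 0 := by nlinarith [norm_nonneg (P i w)]
  simpa using this

/-- One query can change the inner ℂ product of two states by at most
`2 ∑_{i : x_i ≠ y_i} ‖P_i ψ‖·‖P_i φ‖`, where `O_x = ∑_i (−1)^{x_i} P_i` is the
phase-flip oracle and `U` is any unitary. -/
theorem query_progress_bound
    {H : Type*} [NormedAddCommGroup H] [InnerProductSpace ℂ H] [CompleteSpace H]
    {ι : Type*} [Fintype ι] (P : ι → H →L[ℂ] H)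
    (hproj : ∀ i, IsIdempotentElem (P i)) (hsa : ∀ i, IsSelfAdjoint (P i))
    (hsum : ∑ i, P i = 1)
    (U : H ≃ₗᵢ[ℂ] H)
    (x y : ι → Bool)
    (ψ φ : H) (hψ : ‖ψ‖ = 1) (hφ : ‖φ‖ = 1) :
    ‖(inner ℂ ψ φ : ℂ) -
        (inner ℂ (U (∑ i, ((if x i then (-1 : ℂ) else 1) • P i ψ)))
               (U (∑ i, ((if y i then (-1 : ℂ) else 1) • P i φ))) : ℂ)‖ ≤
      2 * ∑ i ∈ Finset.univ.filter (fun i => x i ≠ y i), ‖P i ψ‖ * ‖P i φ‖ := by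
  classical
  set c : ι → ℂ := fun i => if x i then (-1 : ℂ) else 1 with hc
  set d : ι → ℂ := fun i => if y i then (-1 : ℂ) else 1 with hd
  have hid : ∀ k (u : H), P k (P k u) = P k u := fun k u => by
    rw [← ContinuousLinearMap.mul_apply, (hproj k).eq]
  -- inner ℂ product after U
  rw [LinearIsometryEquiv.inner_map_map]
  have hdiag : (inner ℂ (∑ i, c i • P i ψ) (∑ i, d i • P i φ) : ℂ)
      = ∑ i, c i * d i * inner ℂ (P i ψ) (P i φ) := by
    rw [sum_inner]
    refine Finset.sum_congr rfl fun i _ => ?_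
    rw [inner_sum]
    have : ∀ j, (inner ℂ (c i • P i ψ) (d j • P j φ) : ℂ)
        = (starRingEnd ℂ) (c i) * d j * inner ℂ (P i ψ) (P j φ) := by
      intro j; rw [inner_smul_left, inner_smul_right]; ring
    simp_rw [this]
    rw [Finset.sum_eq_single i]
    · have : (starRingEnd ℂ) (c i) = c i := by
        simp only [hc]; split <;> simp
      rw [this]
    · intro j _ hji
      have : (inner ℂ (P i ψ) (P j φ) : ℂ) = 0 := by
        rw [sa_inner (P i) (hsa i), proj_ortho P hproj hsa hsum (Ne.symm hji) φ,
          inner_zero_right]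
      rw [this]; ring
    · intro h; exact absurd (Finset.mem_univ i) h
  have hbase : (inner ℂ ψ φ : ℂ) = ∑ i, inner ℂ (P i ψ) (P i φ) := by
    have h1 : (inner ℂ ψ φ : ℂ) = inner ℂ ψ ((∑ i, P i) φ) := by rw [hsum]; rfl
    rw [h1, ContinuousLinearMap.sum_apply, inner_sum]
    refine Finset.sum_congr rfl fun i _ => ?_
    exact ((sa_inner (P i) (hsa i) ψ (P i φ)).trans (by rw [hid])).symm
  rw [hbase, hdiag, ← Finset.sum_sub_distrib]
  have hterm : ∀ i, (inner ℂ (P i ψ) (P i φ) : ℂ) - c i * d i * inner ℂ (P i ψ) (P i φ)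
      = (if x i ≠ y i then 2 * inner ℂ (P i ψ) (P i φ) else 0) := by
    intro i
    simp only [hc, hd]
    by_cases hxy : x i = y i
    · simp [hxy]; cases y i <;> simp <;> ring
    · simp [hxy]; cases hx : x i <;> cases hy : y i <;>
        simp_all <;> ring
  simp_rw [hterm]
  rw [Finset.sum_ite, Finset.sum_const_zero, add_zero]
  calc ‖∑ i ∈ Finset.univ.filter (fun i => x i ≠ y i), (2:ℂ) * inner ℂ (P i ψ) (P i φ)‖
      ≤ ∑ i ∈ Finset.univ.filter (fun i => x i ≠ y i), ‖(2:ℂ) * inner ℂ (P i ψ) (P i φ)‖ :=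
        norm_sum_le _ _
    _ ≤ ∑ i ∈ Finset.univ.filter (fun i => x i ≠ y i), 2 * (‖P i ψ‖ * ‖P i φ‖) := by
        refine Finset.sum_le_sum fun i _ => ?_
        rw [norm_mul]
        have : ‖(2:ℂ)‖ = 2 := by norm_num
        rw [this]
        exact mul_le_mul_of_nonneg_left (norm_inner_le_norm _ _) (by norm_num)
    _ = 2 * ∑ i ∈ Finset.univ.filter (fun i => x i ≠ y i), ‖P i ψ‖ * ‖P i φ‖ := by
        rw [Finset.mul_sum]
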